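/- arXiv:math/0510181 — 2 statements merged into one kernel-verified Lean document; each statement's English description precedes it below -/
import Mathlib

section
/- Mehler's formula: for 0 < q < 1 and all real x, y, Σ_{n=0}^{∞} (H_n(x) H_n(y) / (2^n n!)) q^n = (1-q²)^{-1/2} exp( -q²(x²+y²)/(1-q²) + 2qxy/(1-q²) ), where H_n are the physicists' Hermite polynomials. -/
open MeasureTheory Polynomial Filter Complex
open scoped Real Nat

/-- The physicists' Hermite polynomials via the Rodrigues formula
`H_n(x) = (-1)^n e^{x²} (d/dx)^n e^{-x²}`. -/
noncomputable def physHermite (n : ℕ) (x : ℝ) : ℝ :=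
  (-1) ^ n * Real.exp (x ^ 2) * iteratedDeriv n (fun t : ℝ => Real.exp (-t ^ 2)) x

/-- Physicists' Hermite polynomials, defined recursively. -/
noncomputable def PH : ℕ → Polynomial ℝ
  | 0 => 1
  | n + 1 => Polynomial.C 2 * Polynomial.X * PH n - Polynomial.derivative (PH n)

lemma deriv_gauss_eq (n : ℕ) (x : ℝ) :
    deriv^[n] (fun t : ℝ => Real.exp (-t ^ 2)) x
      = (-1 : ℝ) ^ n * (Polynomial.aeval x (PH n) * Real.exp (-x ^ 2)) := by
  induction n generalizing x with
  | zero => simp [PH]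
  | succ n ih =>
    replace ih : deriv^[n] _ = _ := funext ih
    have dg : deriv (fun y : ℝ => Real.exp (-y ^ 2)) x = -(2 * x) * Real.exp (-x ^ 2) := by
      rw [deriv_exp (by fun_prop)]
      simp
      ring
    rw [Function.iterate_succ_apply', ih, deriv_const_mul_field, deriv_fun_mul
        (Polynomial.differentiable_aeval _ _) (DifferentiableAt.exp (by fun_prop)),
      Polynomial.deriv_aeval, dg]
    simp only [PH, map_sub, map_mul, aeval_X, aeval_C]
    push_cast
    ring

lemma physHermite_eq (n : ℕ) (x : ℝ) :
    physHermite n x = Polynomial.aeval x (PH n) := by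
  rw [physHermite, iteratedDeriv_eq_iterate, deriv_gauss_eq]
  have h1 : ((-1 : ℝ)) ^ n * (-1 : ℝ) ^ n = 1 := by
    rw [← mul_pow]; norm_num
  have h2 : Real.exp (x ^ 2) * Real.exp (-x ^ 2) = 1 := by
    rw [← Real.exp_add]; norm_num
  calc (-1 : ℝ) ^ n * Real.exp (x ^ 2) *
        ((-1 : ℝ) ^ n * (Polynomial.aeval x (PH n) * Real.exp (-x ^ 2)))
      = ((-1 : ℝ) ^ n * (-1 : ℝ) ^ n) * (Real.exp (x ^ 2) * Real.exp (-x ^ 2)) *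
        Polynomial.aeval x (PH n) := by ring
    _ = _ := by rw [h1, h2]; ring

lemma derivative_PH (n : ℕ) :
    Polynomial.derivative (PH n) = Polynomial.C (2 * n : ℝ) * PH (n - 1) := by
  induction n using Nat.strong_induction_on with
  | _ n ih =>
    match n with
    | 0 => simp [PH]
    | 1 => simp [PH]
    | (k + 2) =>
      have ih1 := ih (k + 1) (by omega)
      have ih0 := ih k (by omega)
      have hk1 : PH (k + 1) = Polynomial.C 2 * Polynomial.X * PH k
          - Polynomial.C (2 * k : ℝ) * PH (k - 1) := by
        rw [show PH (k + 1) = Polynomial.C 2 * Polynomial.X * PH k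
            - Polynomial.derivative (PH k) from rfl, ih0]
      show Polynomial.derivative (Polynomial.C 2 * Polynomial.X * PH (k + 1)
          - Polynomial.derivative (PH (k + 1))) = _
      rw [ih1]
      simp only [Polynomial.derivative_sub, Polynomial.derivative_mul, Polynomial.derivative_C,
        Polynomial.derivative_X, Nat.add_sub_cancel, ih1, ih0]
      rw [show (k + 2 : ℕ) - 1 = k + 1 from rfl]
      rw [hk1]
      push_cast
      simp only [map_add, map_mul, map_one, map_ofNat]
      ring

lemma PH_rec (n : ℕ) (x : ℝ) :
    Polynomial.aeval x (PH (n + 1))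
      = 2 * x * Polynomial.aeval x (PH n) - 2 * n * Polynomial.aeval x (PH (n - 1)) := by
  rw [show PH (n + 1) = Polynomial.C 2 * Polynomial.X * PH n
      - Polynomial.derivative (PH n) from rfl, derivative_PH]
  simp [mul_assoc]

noncomputable def Iint (n : ℕ) (x : ℝ) : ℂ :=
  ∫ t : ℝ, ((x : ℂ) + t * Complex.I) ^ n * Complex.exp (-(t : ℂ) ^ 2)

lemma pow_le_factorial_mul_exp (a : ℝ) (n : ℕ) (ha : 0 ≤ a) :
    a ^ n ≤ n ! * Real.exp a := by
  have h := Real.sum_le_exp_of_nonneg ha (n + 1)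
  have h2 : a ^ n / n ! ≤ Real.exp a := by
    refine le_trans ?_ h
    exact Finset.single_le_sum (f := fun i => a ^ i / i !)
      (fun i _ => by positivity) (Finset.self_mem_range_succ n)
  calc a ^ n = (a ^ n / n !) * n ! := by field_simp
    _ ≤ Real.exp a * n ! := by
        apply mul_le_mul_of_nonneg_right h2 (by positivity)
    _ = n ! * Real.exp a := by ring

lemma norm_aux (x t : ℝ) : ‖(x : ℂ) + t * Complex.I‖ ≤ |x| + |t| := by
  calc ‖(x : ℂ) + t * Complex.I‖ ≤ ‖(x : ℂ)‖ + ‖(t : ℂ) * Complex.I‖ := norm_add_le _ _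
    _ = |x| + |t| := by
        simp

lemma norm_cexp_aux (t : ℝ) : ‖Complex.exp (-(t : ℂ) ^ 2)‖ = Real.exp (-t ^ 2) := by
  rw [Complex.norm_exp]
  norm_cast

lemma integrable_of_le_gauss {F : ℝ → ℂ} (hc : Continuous F) (n : ℕ) (x : ℝ)
    (h : ∀ t, ‖F t‖ ≤ (|x| + |t|) ^ n * Real.exp (-t ^ 2)) : Integrable F := by
  have hint : Integrable fun t : ℝ =>
      (n ! * Real.exp |x| * Real.exp (1 / 2)) * Real.exp (-(1 / 2 : ℝ) * t ^ 2) :=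
    (integrable_exp_neg_mul_sq (by norm_num : (0:ℝ) < 1/2)).const_mul _
  refine hint.mono' hc.aestronglyMeasurable ?_
  filter_upwards with t
  refine (h t).trans ?_
  have h1 : (|x| + |t|) ^ n ≤ n ! * Real.exp (|x| + |t|) :=
    pow_le_factorial_mul_exp _ n (by positivity)
  calc (|x| + |t|) ^ n * Real.exp (-t ^ 2)
      ≤ (n ! * Real.exp (|x| + |t|)) * Real.exp (-t ^ 2) := by
        apply mul_le_mul_of_nonneg_right h1 (Real.exp_pos _).le
    _ = (n ! * Real.exp |x|) * Real.exp (|t| - t ^ 2) := by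
        rw [mul_assoc, ← Real.exp_add, mul_assoc, ← Real.exp_add]; congr 2; ring
    _ ≤ (n ! * Real.exp |x|) * Real.exp (1 / 2 + -(1 / 2 : ℝ) * t ^ 2) := by
        apply mul_le_mul_of_nonneg_left (Real.exp_le_exp.mpr ?_) (by positivity)
        nlinarith [sq_nonneg (|t| - 1), _root_.sq_abs t]
    _ = (n ! * Real.exp |x| * Real.exp (1 / 2)) * Real.exp (-(1 / 2 : ℝ) * t ^ 2) := by
        rw [Real.exp_add]; ring

lemma integrable_main (n : ℕ) (x : ℝ) :
    Integrable fun t : ℝ => ((x : ℂ) + t * Complex.I) ^ n * Complex.exp (-(t : ℂ) ^ 2) := by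
  refine integrable_of_le_gauss (by fun_prop) n x fun t => ?_
  rw [norm_mul, norm_pow, norm_cexp_aux]
  exact mul_le_mul_of_nonneg_right
    (pow_le_pow_left₀ (norm_nonneg _) (norm_aux x t) n) (Real.exp_pos _).le

lemma integrable_tmul (n : ℕ) (x : ℝ) :
    Integrable fun t : ℝ =>
      ((x : ℂ) + t * Complex.I) ^ n * ((t : ℂ) * Complex.exp (-(t : ℂ) ^ 2)) := by
  refine integrable_of_le_gauss (by fun_prop) (n + 1) x fun t => ?_
  rw [norm_mul, norm_pow, norm_mul, norm_cexp_aux]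
  have h1 := norm_aux x t
  have h2 : ‖(t : ℂ)‖ = |t| := by simp
  rw [h2]
  calc ‖(x:ℂ) + t * Complex.I‖ ^ n * (|t| * Real.exp (-t ^ 2))
      ≤ (|x| + |t|) ^ n * ((|x| + |t|) * Real.exp (-t ^ 2)) := by
        refine mul_le_mul (pow_le_pow_left₀ (norm_nonneg _) (norm_aux x t) n)
          (mul_le_mul_of_nonneg_right (le_add_of_nonneg_left (abs_nonneg x))
            (Real.exp_pos _).le) (by positivity) (by positivity)
    _ = (|x| + |t|) ^ (n + 1) * Real.exp (-t ^ 2) := by ring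

lemma hasDerivAt_ofReal' (t : ℝ) : HasDerivAt (fun t : ℝ => (t : ℂ)) 1 t := by
  simpa using (hasDerivAt_id t).ofReal_comp

lemma t_moment (n : ℕ) (x : ℝ) :
    ∫ t : ℝ, ((x : ℂ) + t * Complex.I) ^ n * ((t : ℂ) * Complex.exp (-(t : ℂ) ^ 2))
      = (n * Complex.I / 2) * Iint (n - 1) x := by
  have hu : ∀ t : ℝ, HasDerivAt (fun t : ℝ => ((x : ℂ) + t * Complex.I) ^ n)
      ((n : ℂ) * ((x : ℂ) + t * Complex.I) ^ (n - 1) * Complex.I) t := by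
    intro t
    have hz : HasDerivAt (fun z : ℂ => ((x : ℂ) + z * Complex.I) ^ n)
        ((n : ℂ) * ((x : ℂ) + (t : ℂ) * Complex.I) ^ (n - 1) * Complex.I) (t : ℂ) := by
      have h0 : HasDerivAt (fun z : ℂ => (x : ℂ) + z * Complex.I) Complex.I (t : ℂ) := by
        simpa using ((hasDerivAt_id (t : ℂ)).mul_const Complex.I).const_add (x : ℂ)
      simpa [mul_comm, mul_assoc] using h0.fun_pow n
    exact hz.comp_ofReal
  have hv : ∀ t : ℝ, HasDerivAt (fun t : ℝ => -(1 / 2 : ℂ) * Complex.exp (-(t : ℂ) ^ 2))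
      ((t : ℂ) * Complex.exp (-(t : ℂ) ^ 2)) t := by
    intro t
    have hz : HasDerivAt (fun z : ℂ => -(1 / 2 : ℂ) * Complex.exp (-z ^ 2))
        ((t : ℂ) * Complex.exp (-(t : ℂ) ^ 2)) (t : ℂ) := by
      have h2 : HasDerivAt (fun z : ℂ => -z ^ 2) (-(2 * (t : ℂ))) (t : ℂ) := by
        simpa using ((hasDerivAt_pow 2 (t : ℂ))).fun_neg
      have h4 := h2.cexp.const_mul (-(1 / 2 : ℂ))
      exact h4.congr_deriv (by ring)
    exact hz.comp_ofReal
  have key := integral_mul_deriv_eq_deriv_mul_of_integrable (fun t _ => hu t) (fun t _ => hv t) ?_ ?_ ?_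
  · rw [key]
    have : (fun t : ℝ => (n : ℂ) * ((x : ℂ) + t * Complex.I) ^ (n - 1) * Complex.I *
        (-(1 / 2 : ℂ) * Complex.exp (-(t : ℂ) ^ 2)))
        = fun t : ℝ => (-(n * Complex.I / 2)) *
          (((x : ℂ) + t * Complex.I) ^ (n - 1) * Complex.exp (-(t : ℂ) ^ 2)) := by
      funext t; ring
    rw [this, MeasureTheory.integral_const_mul, Iint]
    ring
  · exact (integrable_tmul n x).congr (by filter_upwards with t using by simp [Pi.mul_apply])
  · have := ((integrable_main (n - 1) x).const_mul ((n : ℂ) * Complex.I * (-(1 / 2 : ℂ))))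
    refine this.congr ?_
    filter_upwards with t
    simp only [Pi.mul_apply]
    ring
  · have := ((integrable_main n x).const_mul (-(1 / 2 : ℂ)))
    refine this.congr ?_
    filter_upwards with t
    simp only [Pi.mul_apply]
    ring

lemma Iint_zero (x : ℝ) : Iint 0 x = (π : ℂ) ^ (1 / 2 : ℂ) := by
  rw [Iint]
  have h : ∀ t : ℝ, ((x : ℂ) + t * Complex.I) ^ 0 * Complex.exp (-(t : ℂ) ^ 2)
      = Complex.exp ((-1 : ℂ) * t ^ 2 + 0 * t + 0) := by
    intro t; ring_nf
  simp_rw [h]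
  rw [integral_cexp_quadratic (by norm_num) 0 0]
  norm_num

lemma Iint_succ (n : ℕ) (x : ℝ) :
    Iint (n + 1) x = x * Iint n x - ((n : ℂ) / 2) * Iint (n - 1) x := by
  have h : ∀ t : ℝ, ((x : ℂ) + t * Complex.I) ^ (n + 1) * Complex.exp (-(t : ℂ) ^ 2)
      = (x : ℂ) * (((x : ℂ) + t * Complex.I) ^ n * Complex.exp (-(t : ℂ) ^ 2))
        + Complex.I * (((x : ℂ) + t * Complex.I) ^ n *
            ((t : ℂ) * Complex.exp (-(t : ℂ) ^ 2))) := by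
    intro t; ring
  have tm := t_moment n x
  simp only [Iint] at tm ⊢
  rw [funext h,
    integral_add ((integrable_main n x).const_mul _) ((integrable_tmul n x).const_mul _),
    MeasureTheory.integral_const_mul, MeasureTheory.integral_const_mul, tm]
  linear_combination ((n : ℂ) / 2 *
    ∫ t : ℝ, ((x : ℂ) + t * Complex.I) ^ (n - 1) * Complex.exp (-(t : ℂ) ^ 2)) * Complex.I_mul_I

lemma Iint_eq (n : ℕ) (x : ℝ) :
    Iint n x = (π : ℂ) ^ (1 / 2 : ℂ) / 2 ^ n * ((Polynomial.aeval x (PH n) : ℝ) : ℂ) := by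
  induction n using Nat.strong_induction_on with
  | _ n ih =>
    match n with
    | 0 => simp [Iint_zero, PH]
    | (m + 1) =>
      rw [Iint_succ m x, ih m (by omega)]
      have hrecC : ((Polynomial.aeval x (PH (m + 1)) : ℝ) : ℂ)
          = 2 * (x : ℂ) * ((Polynomial.aeval x (PH m) : ℝ) : ℂ)
            - 2 * (m : ℂ) * ((Polynomial.aeval x (PH (m - 1)) : ℝ) : ℂ) := by
        exact_mod_cast congrArg Complex.ofReal (PH_rec m x)
      rw [hrecC]
      rcases m with _ | k
      · norm_num
        ring
      · rw [ih (k + 1 - 1) (by omega)]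
        have h2 : ((2 : ℂ)) ^ (k + 1) ≠ 0 := pow_ne_zero _ two_ne_zero
        simp only [Nat.add_sub_cancel]
        field_simp
        ring

theorem mehler_formula (q x y : ℝ) (hq0 : 0 < q) (hq1 : q < 1) :
    ∑' n : ℕ, (physHermite n x * physHermite n y / (2 ^ n * n.factorial)) * q ^ n
      = (1 - q ^ 2) ^ (-(1:ℝ)/2) *
        Real.exp (-q ^ 2 * (x ^ 2 + y ^ 2) / (1 - q ^ 2) + 2 * q * x * y / (1 - q ^ 2)) := by
  have h1q : (0:ℝ) < 1 - q := by linarith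
  have h1q2 : (0:ℝ) < 1 - q ^ 2 := by nlinarith
  have hπ0 : ((π : ℝ) : ℂ) ≠ 0 := Complex.ofReal_ne_zero.mpr Real.pi_ne_zero
  set μ : Measure (ℝ × ℝ) := (volume : Measure ℝ).prod (volume : Measure ℝ) with hμ
  set f : ℕ → ℝ × ℝ → ℂ := fun n p =>
    (((2 * q : ℝ) : ℂ) ^ n / (n ! : ℂ)) *
      ((((x : ℂ) + p.1 * Complex.I) ^ n * Complex.exp (-(p.1 : ℂ) ^ 2)) *
       (((y : ℂ) + p.2 * Complex.I) ^ n * Complex.exp (-(p.2 : ℂ) ^ 2))) with hf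
  set g : ℝ × ℝ → ℝ := fun p =>
    Real.exp (q * (x ^ 2 + y ^ 2)) *
      (Real.exp (-(1 - q) * p.1 ^ 2) * Real.exp (-(1 - q) * p.2 ^ 2)) with hgdef
  have hg : Integrable g μ :=
    (((integrable_exp_neg_mul_sq h1q).mul_prod (integrable_exp_neg_mul_sq h1q)).const_mul _)
  have hfc : ∀ n, Continuous (f n) := by
    intro n
    rw [hf]
    fun_prop
  have hfm : ∀ n, AEStronglyMeasurable (f n) μ := fun n => (hfc n).aestronglyMeasurable
  -- pointwise norms
  have hr2 : ∀ s : ℝ, ‖(x : ℂ) + s * Complex.I‖ ^ 2 = x ^ 2 + s ^ 2 := fun s => by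
    rw [Complex.sq_norm, Complex.normSq_add_mul_I]
  have hu2 : ∀ t : ℝ, ‖(y : ℂ) + t * Complex.I‖ ^ 2 = y ^ 2 + t ^ 2 := fun t => by
    rw [Complex.sq_norm, Complex.normSq_add_mul_I]
  have hnorm : ∀ n p, ‖f n p‖ =
      (2 * q * (‖(x : ℂ) + p.1 * Complex.I‖ * ‖(y : ℂ) + p.2 * Complex.I‖)) ^ n / n ! *
        (Real.exp (-p.1 ^ 2) * Real.exp (-p.2 ^ 2)) := by
    intro n p
    rw [hf]
    simp only [norm_mul, norm_div, norm_pow, norm_cexp_aux, Complex.norm_natCast,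
      Complex.norm_real, Real.norm_eq_abs]
    rw [_root_.abs_two, abs_of_pos hq0, mul_pow, mul_pow]
    ring
  have hsum : ∀ p, Summable fun n => ‖f n p‖ := by
    intro p
    apply Summable.congr
      ((Real.summable_pow_div_factorial
        (2 * q * (‖(x : ℂ) + p.1 * Complex.I‖ * ‖(y : ℂ) + p.2 * Complex.I‖))).mul_right
        (Real.exp (-p.1 ^ 2) * Real.exp (-p.2 ^ 2)))
    intro n
    rw [hnorm n p]
  -- exponent bound
  have hexpbound : ∀ p : ℝ × ℝ,
      2 * q * (‖(x : ℂ) + p.1 * Complex.I‖ * ‖(y : ℂ) + p.2 * Complex.I‖) + -p.1 ^ 2 + -p.2 ^ 2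
        ≤ q * (x ^ 2 + y ^ 2) + (-(1 - q) * p.1 ^ 2 + -(1 - q) * p.2 ^ 2) := by
    intro p
    have h1 := hr2 p.1
    have h2 := hu2 p.2
    nlinarith [sq_nonneg (‖(x : ℂ) + p.1 * Complex.I‖ - ‖(y : ℂ) + p.2 * Complex.I‖), hq0.le,
      mul_le_mul_of_nonneg_left
        (sq_nonneg (‖(x : ℂ) + p.1 * Complex.I‖ - ‖(y : ℂ) + p.2 * Complex.I‖)) hq0.le]
  have hgp : ∀ p : ℝ × ℝ, g p =
      Real.exp (q * (x ^ 2 + y ^ 2) + (-(1 - q) * p.1 ^ 2 + -(1 - q) * p.2 ^ 2)) := by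
    intro p
    simp only [hgdef, ← Real.exp_add]
  have hts : ∀ p, (∑' n, ‖f n p‖) ≤ g p := by
    intro p
    have h1 : (∑' n, ‖f n p‖) =
        Real.exp (2 * q * (‖(x : ℂ) + p.1 * Complex.I‖ * ‖(y : ℂ) + p.2 * Complex.I‖)) *
          (Real.exp (-p.1 ^ 2) * Real.exp (-p.2 ^ 2)) := by
      rw [tsum_congr (fun n => hnorm n p), tsum_mul_right, Real.exp_eq_exp_ℝ,
        NormedSpace.exp_eq_tsum_div]
    rw [h1, hgp p, ← Real.exp_add, ← Real.exp_add]
    exact Real.exp_le_exp.mpr (by linarith [hexpbound p])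
  have hlint : ∑' n, ∫⁻ p, ‖f n p‖ₑ ∂μ ≠ ⊤ := by
    rw [← lintegral_tsum (fun n => (hfm n).enorm)]
    have hb : ∀ p, (∑' n, (‖f n p‖₊ : ENNReal)) ≤ ENNReal.ofReal (g p) := by
      intro p
      have h1 : (∑' n, (‖f n p‖₊ : ENNReal)) = ENNReal.ofReal (∑' n, ‖f n p‖) := by
        rw [ENNReal.ofReal_tsum_of_nonneg (fun n => norm_nonneg _) (hsum p)]
        exact tsum_congr fun n => (ofReal_norm _).symm
      rw [h1]
      exact ENNReal.ofReal_le_ofReal (hts p)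
    exact ne_of_lt (lt_of_le_of_lt (lintegral_mono hb) hg.lintegral_lt_top)
  have hswap : ∫ p, (∑' n, f n p) ∂μ = ∑' n, ∫ p, f n p ∂μ := integral_tsum hfm hlint
  -- per-term integral
  have hP : ((π : ℝ) : ℂ) ^ (1/2 : ℂ) * ((π : ℝ) : ℂ) ^ (1/2 : ℂ) = ((π : ℝ) : ℂ) := by
    rw [← Complex.cpow_add _ _ hπ0]
    norm_num
  have hterm : ∀ n : ℕ, ∫ p, f n p ∂μ =
      ((π : ℝ) : ℂ) * ((physHermite n x * physHermite n y / (2 ^ n * n !) * q ^ n : ℝ) : ℂ) := by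
    intro n
    rw [hf]
    simp only
    rw [integral_const_mul, hμ, integral_prod_mul
      (fun s : ℝ => ((x : ℂ) + s * Complex.I) ^ n * Complex.exp (-(s : ℂ) ^ 2))
      (fun t : ℝ => ((y : ℂ) + t * Complex.I) ^ n * Complex.exp (-(t : ℂ) ^ 2))]
    rw [show (∫ s : ℝ, ((x : ℂ) + s * Complex.I) ^ n * Complex.exp (-(s : ℂ) ^ 2)) = Iint n x
        from rfl,
      show (∫ t : ℝ, ((y : ℂ) + t * Complex.I) ^ n * Complex.exp (-(t : ℂ) ^ 2)) = Iint n y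
        from rfl,
      Iint_eq, Iint_eq, ← physHermite_eq, ← physHermite_eq]
    push_cast
    rw [mul_pow]
    generalize hT : (2:ℂ) ^ n = T
    have hT0 : T ≠ 0 := by rw [← hT]; exact pow_ne_zero _ two_ne_zero
    have hTT : T * T⁻¹ = 1 := mul_inv_cancel₀ hT0
    linear_combination (((physHermite n x : ℝ) : ℂ) * ((physHermite n y : ℝ) : ℂ)
      / (T * ((n ! : ℕ) : ℂ)) * ((q : ℝ) : ℂ) ^ n) * hP
      + (((q : ℝ) : ℂ) ^ n * (((n ! : ℕ) : ℂ))⁻¹ * ((((π:ℝ):ℂ)) ^ (1/2:ℂ)) ^ 2 * T⁻¹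
        * ((physHermite n x : ℝ) : ℂ) * ((physHermite n y : ℝ) : ℂ)) * hTT
  -- pointwise sum
  have hpt : ∀ p : ℝ × ℝ, (∑' n, f n p) =
      Complex.exp (((2 * q : ℝ) : ℂ) * (((x : ℂ) + p.1 * Complex.I) *
          (((y : ℂ) + p.2 * Complex.I)))) *
        (Complex.exp (-(p.1 : ℂ) ^ 2) * Complex.exp (-(p.2 : ℂ) ^ 2)) := by
    intro p
    have h1 : ∀ n, f n p =
        (((2 * q : ℝ) : ℂ) * (((x : ℂ) + p.1 * Complex.I) * ((y : ℂ) + p.2 * Complex.I))) ^ n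
          / (n ! : ℂ) *
          (Complex.exp (-(p.1 : ℂ) ^ 2) * Complex.exp (-(p.2 : ℂ) ^ 2)) := by
      intro n
      rw [hf]
      simp only [mul_pow]
      ring
    rw [tsum_congr h1, tsum_mul_right, Complex.exp_eq_exp_ℂ, NormedSpace.exp_eq_tsum_div]
  -- the big exponential is integrable
  set big : ℝ × ℝ → ℂ := fun p =>
    Complex.exp (((2 * q : ℝ) : ℂ) * (((x : ℂ) + p.1 * Complex.I) *
        (((y : ℂ) + p.2 * Complex.I)))) *
      (Complex.exp (-(p.1 : ℂ) ^ 2) * Complex.exp (-(p.2 : ℂ) ^ 2)) with hbigdef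
  have hbigcont : Continuous big := by
    rw [hbigdef]
    fun_prop
  have hbignorm : ∀ p, ‖big p‖ ≤ g p := by
    intro p
    rw [hbigdef]
    simp only [norm_mul, Complex.norm_exp, ← Complex.ofReal_pow,
      Complex.neg_re, Complex.ofReal_re]
    have hre : (((2 * q : ℝ) : ℂ) * (((x : ℂ) + p.1 * Complex.I) *
        (((y : ℂ) + p.2 * Complex.I)))).re
        ≤ 2 * q * (‖(x : ℂ) + p.1 * Complex.I‖ * ‖(y : ℂ) + p.2 * Complex.I‖) := by
      refine le_trans (Complex.re_le_norm _) ?_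
      rw [norm_mul, norm_mul, Complex.norm_real, Real.norm_eq_abs,
        abs_of_pos (by linarith : (0:ℝ) < 2 * q)]
    calc Real.exp ((((2 * q : ℝ) : ℂ) * (((x : ℂ) + p.1 * Complex.I) *
            (((y : ℂ) + p.2 * Complex.I)))).re) * (Real.exp (-p.1 ^ 2) * Real.exp (-p.2 ^ 2))
        ≤ Real.exp (2 * q * (‖(x : ℂ) + p.1 * Complex.I‖ * ‖(y : ℂ) + p.2 * Complex.I‖)) *
          (Real.exp (-p.1 ^ 2) * Real.exp (-p.2 ^ 2)) := by
          apply mul_le_mul_of_nonneg_right (Real.exp_le_exp.mpr hre) (by positivity)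
      _ ≤ g p := by
          rw [hgp p, ← Real.exp_add, ← Real.exp_add]
          exact Real.exp_le_exp.mpr (by linarith [hexpbound p])
  have hbigint : Integrable big μ := by
    refine hg.mono' hbigcont.aestronglyMeasurable ?_
    filter_upwards with p using hbignorm p
  -- compute the double integral
  set b₂ : ℂ := ((q ^ 2 - 1 : ℝ) : ℂ) with hb₂def
  have hb₂ : b₂.re < 0 := by
    rw [hb₂def, Complex.ofReal_re]; nlinarith
  set c₂ : ℂ := ((2 * q * y - 2 * q ^ 2 * x : ℝ) : ℂ) * Complex.I with hc₂def
  set d₂ : ℂ := ((2 * q * x * y - q ^ 2 * x ^ 2 : ℝ) : ℂ) with hd₂def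
  have hbigval : ∫ p, big p ∂μ =
      ((π : ℝ) : ℂ) ^ (1/2 : ℂ) *
        (((π : ℝ) : ℂ) / -b₂) ^ (1/2 : ℂ) * Complex.exp (d₂ - c₂ ^ 2 / (4 * b₂)) := by
    rw [hμ] at hbigint ⊢
    rw [integral_prod _ hbigint]
    have hinner : ∀ s : ℝ, (∫ t : ℝ, big (s, t)) =
        ((π : ℝ) : ℂ) ^ (1/2 : ℂ) *
          Complex.exp (b₂ * (s:ℂ) ^ 2 + c₂ * (s:ℂ) + d₂) := by
      intro s
      have heq : ∀ t : ℝ, big (s, t) =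
          Complex.exp ((-1 : ℂ) * (t:ℂ) ^ 2
            + (((2 * q : ℝ) : ℂ) * ((x : ℂ) + s * Complex.I) * Complex.I) * (t:ℂ)
            + (((2 * q : ℝ) : ℂ) * ((x : ℂ) + s * Complex.I) * (y : ℂ) - (s:ℂ) ^ 2)) := by
        intro t
        rw [hbigdef]
        simp only
        rw [← Complex.exp_add, ← Complex.exp_add]
        congr 1
        ring
      rw [funext heq, integral_cexp_quadratic (by norm_num) _ _]
      have harg : (((2 * q : ℝ) : ℂ) * ((x : ℂ) + s * Complex.I) * (y : ℂ) - (s:ℂ) ^ 2)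
          - (((2 * q : ℝ) : ℂ) * ((x : ℂ) + s * Complex.I) * Complex.I) ^ 2 / (4 * (-1)) =
          b₂ * (s:ℂ) ^ 2 + c₂ * (s:ℂ) + d₂ := by
        rw [hb₂def, hc₂def, hd₂def]
        have hI2 : (Complex.I) ^ 2 = -1 := Complex.I_sq
        push_cast
        linear_combination (2 * (q:ℂ) ^ 2 * (x:ℂ) * (s:ℂ) * Complex.I
          + (q:ℂ) ^ 2 * (s:ℂ) ^ 2 * (Complex.I ^ 2 - 1) + (q:ℂ) ^ 2 * (x:ℂ) ^ 2) * hI2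
      rw [harg]
      norm_num
    calc (∫ s : ℝ, ∫ t : ℝ, big (s, t))
        = ∫ s : ℝ, ((π : ℝ) : ℂ) ^ (1/2 : ℂ) *
            Complex.exp (b₂ * (s:ℂ) ^ 2 + c₂ * (s:ℂ) + d₂) :=
          integral_congr_ae (Filter.Eventually.of_forall hinner)
      _ = _ := by
          rw [integral_const_mul, integral_cexp_quadratic hb₂ c₂ d₂, mul_assoc]
  -- chain of equalities
  have hchain : ((π : ℝ) : ℂ) *
      ((∑' n : ℕ, (physHermite n x * physHermite n y / (2 ^ n * n.factorial)) * q ^ n : ℝ) : ℂ)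
      = ∫ p, big p ∂μ := by
    calc ((π : ℝ) : ℂ) * ((∑' n : ℕ,
            (physHermite n x * physHermite n y / (2 ^ n * n.factorial)) * q ^ n : ℝ) : ℂ)
        = ∑' n : ℕ, ((π : ℝ) : ℂ) *
            (((physHermite n x * physHermite n y / (2 ^ n * n.factorial)) * q ^ n : ℝ) : ℂ) := by
          rw [Complex.ofReal_tsum, ← tsum_mul_left]
      _ = ∑' n : ℕ, ∫ p, f n p ∂μ := tsum_congr fun n => (hterm n).symm
      _ = ∫ p, (∑' n, f n p) ∂μ := hswap.symm
      _ = ∫ p, big p ∂μ := integral_congr_ae (Filter.Eventually.of_forall hpt)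
  -- identify with the stated RHS
  have hq21 : q ^ 2 - 1 ≠ 0 := by nlinarith
  set w : ℝ := -q ^ 2 * (x ^ 2 + y ^ 2) / (1 - q ^ 2) + 2 * q * x * y / (1 - q ^ 2) with hwdef
  have hcexp : Complex.exp (d₂ - c₂ ^ 2 / (4 * b₂)) = ((Real.exp w : ℝ) : ℂ) := by
    have hreal : 2 * q * x * y - q ^ 2 * x ^ 2
        + (2 * q * y - 2 * q ^ 2 * x) ^ 2 / (4 * (q ^ 2 - 1)) = w := by
      rw [hwdef]
      field_simp
      ring
    have hc2 : c₂ ^ 2 = -(((2 * q * y - 2 * q ^ 2 * x) ^ 2 : ℝ) : ℂ) := by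
      rw [hc₂def, mul_pow, Complex.I_sq]
      push_cast
      ring
    have harg2 : d₂ - c₂ ^ 2 / (4 * b₂) = ((w : ℝ) : ℂ) := by
      rw [hc2, hd₂def, hb₂def, ← hreal]
      have hne : ((q ^ 2 - 1 : ℝ) : ℂ) ≠ 0 := Complex.ofReal_ne_zero.mpr hq21
      push_cast at hne ⊢
      field_simp
      ring
    rw [harg2, ← Complex.ofReal_exp]
  have hpow : ((π : ℝ) : ℂ) ^ (1/2 : ℂ) * (((π : ℝ) : ℂ) / -b₂) ^ (1/2 : ℂ)
      = (((π : ℝ) * (1 - q ^ 2) ^ (-(1:ℝ)/2) : ℝ) : ℂ) := by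
    have hnb : -b₂ = ((1 - q ^ 2 : ℝ) : ℂ) := by
      rw [hb₂def]; push_cast; ring
    have hhalf : (1/2 : ℂ) = ((1/2 : ℝ) : ℂ) := by norm_num
    rw [hnb, ← Complex.ofReal_div, hhalf, ← Complex.ofReal_cpow Real.pi_nonneg,
      ← Complex.ofReal_cpow (by positivity), ← Complex.ofReal_mul]
    congr 1
    have h1 : Real.pi ^ (1/2 : ℝ) * Real.pi ^ (1/2 : ℝ) = π := by
      rw [← Real.rpow_add Real.pi_pos]
      norm_num
    rw [Real.div_rpow Real.pi_nonneg h1q2.le]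
    rw [show (-(1:ℝ)/2) = -(1/2 : ℝ) by norm_num, Real.rpow_neg h1q2.le]
    calc π ^ (1/2:ℝ) * (π ^ (1/2:ℝ) / (1 - q ^ 2) ^ (1/2:ℝ))
        = (π ^ (1/2:ℝ) * π ^ (1/2:ℝ)) / (1 - q ^ 2) ^ (1/2:ℝ) := by ring
      _ = π / (1 - q ^ 2) ^ (1/2:ℝ) := by rw [h1]
      _ = π * ((1 - q ^ 2) ^ (1/2:ℝ))⁻¹ := by ring
  have hS : ((π : ℝ) : ℂ) *
      ((∑' n : ℕ, (physHermite n x * physHermite n y / (2 ^ n * n.factorial)) * q ^ n : ℝ) : ℂ)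
      = ((π : ℝ) : ℂ) * (((1 - q ^ 2) ^ (-(1:ℝ)/2) * Real.exp w : ℝ) : ℂ) := by
    rw [hchain, hbigval, hcexp, hpow]
    push_cast
    ring
  have hS2 := mul_left_cancel₀ hπ0 hS
  rw [hwdef] at hS2
  exact_mod_cast hS2
end

section
/- For real a ≠ 0, ∫_{-∞}^{∞} cos(a t) / (cosh(2t) + 1) dt = (πa/2) / sinh(πa/2). -/
open MeasureTheory Set Complex Real

lemma coshfi_cont (a : ℝ) : Continuous (fun t : ℝ =>
    Complex.exp (↑(a*t) * Complex.I) / ((Real.cosh (2*t) + 1 : ℝ) : ℂ)) := by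
  apply Continuous.div
  · exact Complex.continuous_exp.comp (by continuity)
  · continuity
  · intro t
    have h : 0 < Real.cosh (2*t) + 1 := by positivity
    exact_mod_cast h.ne'

lemma coshfi_norm (a t : ℝ) : ‖Complex.exp (↑(a*t) * Complex.I) / ((Real.cosh (2*t) + 1 : ℝ) : ℂ)‖
    = 1 / (Real.cosh (2*t) + 1) := by
  have h : 0 < Real.cosh (2*t) + 1 := by positivity
  rw [norm_div, Complex.norm_exp_ofReal_mul_I, Complex.norm_real,
    Real.norm_eq_abs, abs_of_pos h]

lemma coshfi_integrable (a : ℝ) : Integrable (fun t : ℝ =>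
    Complex.exp (↑(a*t) * Complex.I) / ((Real.cosh (2*t) + 1 : ℝ) : ℂ)) := by
  rw [← integrableOn_univ, ← Set.Iic_union_Ioi (a := (0:ℝ))]
  apply IntegrableOn.union
  · apply Integrable.mono' ((integrableOn_exp_Iic 0).const_mul 2)
      ((coshfi_cont a).aestronglyMeasurable.restrict)
    filter_upwards [ae_restrict_mem measurableSet_Iic] with t ht
    rw [coshfi_norm]
    have h : 0 < Real.cosh (2*t) + 1 := by positivity
    rw [div_le_iff₀ h]
    have h1 : Real.exp t * Real.exp (-(2*t)) = Real.exp (-t) := by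
      rw [← Real.exp_add]; ring_nf
    have h2 : (1:ℝ) ≤ Real.exp (-t) := by
      rw [← Real.exp_zero]; exact Real.exp_le_exp.mpr (by simpa using ht)
    have h3 := Real.cosh_eq (2*t)
    nlinarith [Real.exp_pos t, Real.exp_pos (2*t), Real.exp_pos (-(2*t)),
      mul_pos (Real.exp_pos t) (Real.exp_pos (2*t))]
  · apply Integrable.mono' ((exp_neg_integrableOn_Ioi 0 one_pos).const_mul 2)
      ((coshfi_cont a).aestronglyMeasurable.restrict)
    filter_upwards [ae_restrict_mem measurableSet_Ioi] with t ht
    rw [coshfi_norm]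
    have h : 0 < Real.cosh (2*t) + 1 := by positivity
    rw [div_le_iff₀ h]
    have h1 : Real.exp (-t) * Real.exp (2*t) = Real.exp t := by
      rw [← Real.exp_add]; ring_nf
    have h2 : (1:ℝ) ≤ Real.exp t := by
      rw [← Real.exp_zero]; exact Real.exp_le_exp.mpr (le_of_lt ht)
    have h3 := Real.cosh_eq (2*t)
    have h4 : Real.exp (-1*t) = Real.exp (-t) := by ring_nf
    rw [h4]
    nlinarith [Real.exp_pos (-t), Real.exp_pos (2*t), Real.exp_pos (-(2*t)),
      mul_pos (Real.exp_pos (-t)) (Real.exp_pos (-(2*t)))]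

lemma cpow_pos_real (x : ℝ) (hx : 0 < x) (w : ℂ) :
    (x:ℂ)^w = Complex.exp (↑(Real.log x) * w) := by
  rw [Complex.cpow_def_of_ne_zero (Complex.ofReal_ne_zero.2 hx.ne'), Complex.ofReal_log hx.le]

lemma coshfi_sub1 (a : ℝ) :
    ∫ x in Ioi (0:ℝ), (x:ℂ)^(-((↑a * Complex.I)/2)) / ((((1+x)^2 : ℝ)) : ℂ)
      = ∫ t : ℝ, Complex.exp (↑(a*t) * Complex.I) / ((Real.cosh (2*t) + 1 : ℝ) : ℂ) := by
  set z : ℂ := (↑a * Complex.I) / 2 with hzdef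
  have himg : (fun t : ℝ => Real.exp (-2*t)) '' univ = Ioi (0:ℝ) := by
    rw [image_univ]
    ext x
    constructor
    · rintro ⟨t, rfl⟩; exact Real.exp_pos _
    · intro hx
      refine ⟨-(Real.log x)/2, ?_⟩
      show Real.exp (-2 * (-(Real.log x)/2)) = x
      rw [show -2 * (-(Real.log x)/2) = Real.log x by ring, Real.exp_log hx]
  have hderiv : ∀ t ∈ (univ : Set ℝ), HasDerivWithinAt (fun t : ℝ => Real.exp (-2*t))
      (Real.exp (-2*t) * (-2)) univ t := by
    intro t _
    have h2 : HasDerivAt (fun t : ℝ => -2*t) (-2) t := by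
      simpa using (hasDerivAt_id t).const_mul (-2:ℝ)
    exact ((Real.hasDerivAt_exp (-2*t)).comp t h2).hasDerivWithinAt
  have hinj : InjOn (fun t : ℝ => Real.exp (-2*t)) univ := by
    intro t1 _ t2 _ h
    have := Real.exp_injective h
    linarith
  have := MeasureTheory.integral_image_eq_integral_abs_deriv_smul MeasurableSet.univ hderiv hinj
    (fun x : ℝ => (x:ℂ)^(-z) / ((((1+x)^2 : ℝ)) : ℂ))
  rw [himg] at this
  rw [this, MeasureTheory.Measure.restrict_univ]
  congr 1
  ext t
  have hE : (0:ℝ) < Real.exp (-2*t) := Real.exp_pos _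
  rw [cpow_pos_real _ hE, Real.log_exp]
  have hexp : Complex.exp (↑(-2*t) * -z) = Complex.exp (↑(a*t) * Complex.I) := by
    congr 1
    rw [hzdef]
    push_cast
    ring
  rw [hexp]
  have hre : |Real.exp (-2*t) * (-2)| = 2 * Real.exp (-2*t) := by
    rw [abs_of_nonpos (by nlinarith [Real.exp_pos (-2*t)])]; ring
  rw [hre, real_smul, mul_div_assoc' , div_eq_div_iff]
  · have h1 : Real.exp (-2*t) * Real.exp (2*t) = 1 := by rw [← Real.exp_add]; norm_num
    have h3 := Real.cosh_eq (2*t)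
    have key : (2 * Real.exp (-2*t)) * (Real.cosh (2*t) + 1) = (1 + Real.exp (-2*t))^2 := by
      rw [h3]
      have h2 : Real.exp (-(2*t)) = Real.exp (-2*t) := by ring_nf
      rw [h2]
      nlinarith [Real.exp_pos (-2*t)]
    rw [mul_right_comm, ← Complex.ofReal_mul, key, mul_comm]
  · exact_mod_cast (by positivity : ((1 + Real.exp (-2*t))^2 : ℝ) ≠ 0)
  · have h : (0:ℝ) < Real.cosh (2*t) + 1 := by positivity
    exact_mod_cast h.ne'

lemma coshfi_sub2 (z : ℂ) :
    ∫ y in Ioo (0:ℝ) 1, (y:ℂ)^(-z) * ((1-y : ℝ) : ℂ)^z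
      = ∫ x in Ioi (0:ℝ), (x:ℂ)^(-z) / ((((1+x)^2 : ℝ)) : ℂ) := by
  have himg : (fun y : ℝ => y/(1-y)) '' Ioo 0 1 = Ioi (0:ℝ) := by
    ext u
    simp only [mem_image, mem_Ioo, mem_Ioi]
    constructor
    · rintro ⟨y, ⟨hy0, hy1⟩, rfl⟩
      exact div_pos hy0 (by linarith)
    · intro hu
      refine ⟨u/(1+u), ⟨div_pos hu (by linarith), ?_⟩, ?_⟩
      · rw [div_lt_one (by linarith)]; linarith
      · field_simp
        ring
  have hderiv : ∀ y ∈ Ioo (0:ℝ) 1, HasDerivWithinAt (fun y : ℝ => y/(1-y))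
      (((1-y)^2)⁻¹) (Ioo 0 1) y := by
    intro y hy
    have hne : (1:ℝ) - y ≠ 0 := by rw [mem_Ioo] at hy; intro h; linarith [hy.2]
    have := (hasDerivAt_id y).div ((hasDerivAt_id y).const_sub 1) hne
    simp only [id_eq] at this
    have heq : (1 * (1 - y) - y * (-1)) / (1-y)^2 = ((1-y)^2)⁻¹ := by
      rw [inv_eq_one_div]
      congr 1
      ring
    rw [heq] at this
    exact this.hasDerivWithinAt
  have hinj : InjOn (fun y : ℝ => y/(1-y)) (Ioo 0 1) := by
    intro y1 h1 y2 h2 h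
    rw [mem_Ioo] at h1 h2
    have hn1 : (1:ℝ) - y1 ≠ 0 := by intro hc; linarith [h1.2]
    have hn2 : (1:ℝ) - y2 ≠ 0 := by intro hc; linarith [h2.2]
    field_simp at h
    linarith
  have := MeasureTheory.integral_image_eq_integral_abs_deriv_smul measurableSet_Ioo hderiv hinj
    (fun x : ℝ => (x:ℂ)^(-z) / ((((1+x)^2 : ℝ)) : ℂ))
  rw [himg] at this
  rw [this]
  apply setIntegral_congr_fun measurableSet_Ioo
  intro y hy
  rw [mem_Ioo] at hy
  obtain ⟨hy0, hy1⟩ := hy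
  have h1y : (0:ℝ) < 1 - y := by linarith
  have hfy : (0:ℝ) < y/(1-y) := div_pos hy0 h1y
  simp only
  have habs : |((1-y)^2)⁻¹| = ((1-y)^2)⁻¹ := abs_of_pos (by positivity)
  rw [habs, real_smul]
  have hplus : (1 + y/(1-y)) = 1/(1-y) := by field_simp; ring
  rw [hplus]
  have hcpow : ((y/(1-y) : ℝ) : ℂ)^(-z) = (y:ℂ)^(-z) * ((1-y : ℝ) : ℂ)^z := by
    rw [cpow_pos_real _ hfy, cpow_pos_real _ hy0, cpow_pos_real _ h1y,
      Real.log_div hy0.ne' h1y.ne', ← Complex.exp_add]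
    congr 1
    push_cast
    ring
  rw [hcpow]
  have hval : ((1/(1-y))^2 : ℝ) = (((1-y)^2)⁻¹ : ℝ) := by field_simp
  have hc : ((((1-y)^2)⁻¹ : ℝ) : ℂ) ≠ 0 :=
    mod_cast (by positivity : ((((1-y)^2)⁻¹ : ℝ)) ≠ 0)
  rw [hval, mul_comm (((((1-y)^2)⁻¹ : ℝ)) : ℂ), div_mul_cancel₀ _ hc]

lemma coshfi_beta (z : ℂ) :
    Complex.betaIntegral (1-z) (1+z)
      = ∫ y in Ioo (0:ℝ) 1, (y:ℂ)^(-z) * ((1-y : ℝ) : ℂ)^z := by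
  rw [Complex.betaIntegral, intervalIntegral.integral_of_le zero_le_one,
    MeasureTheory.integral_Ioc_eq_integral_Ioo]
  apply setIntegral_congr_fun measurableSet_Ioo
  intro y _
  simp only
  push_cast
  ring_nf

lemma coshfi_gamma (a : ℝ) (ha : a ≠ 0) :
    Complex.betaIntegral (1 - (↑a * Complex.I)/2) (1 + (↑a * Complex.I)/2)
      = ((Real.pi * a / 2) / Real.sinh (Real.pi * a / 2) : ℝ) := by
  set z : ℂ := (↑a * Complex.I) / 2 with hzdef
  have hz : z ≠ 0 := by
    simp [hzdef, Complex.ext_iff, ha, Complex.I_ne_zero]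
  have h1 : (0:ℝ) < Complex.re (1 - z) := by
    simp [hzdef]
  have h2 : (0:ℝ) < Complex.re (1 + z) := by
    simp [hzdef]
  have hbeta := Complex.Gamma_mul_Gamma_eq_betaIntegral h1 h2
  have hG2 : Complex.Gamma ((1 - z) + (1 + z)) = 1 := by
    rw [show (1 - z) + (1 + z) = (1:ℂ) + 1 by ring, Complex.Gamma_add_one _ one_ne_zero,
      Complex.Gamma_one, mul_one]
  rw [hG2, one_mul] at hbeta
  rw [← hbeta]
  rw [show (1:ℂ) + z = z + 1 by ring, Complex.Gamma_add_one z hz, mul_comm (Complex.Gamma (1-z)), mul_assoc,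
    Complex.Gamma_mul_Gamma_one_sub]
  have hsin : Complex.sin (↑Real.pi * z) = ↑(Real.sinh (Real.pi * a / 2)) * Complex.I := by
    rw [show (↑Real.pi * z) = (↑(Real.pi * a / 2) : ℂ) * Complex.I by rw [hzdef]; push_cast; ring,
      Complex.sin_mul_I, Complex.ofReal_sinh]
  rw [hsin]
  have hs : Real.sinh (Real.pi * a / 2) ≠ 0 := by
    rw [Real.sinh_ne_zero]
    positivity
  have hs' : (↑(Real.sinh (Real.pi * a / 2)) : ℂ) ≠ 0 := mod_cast hs
  rw [show z * (↑Real.pi / (↑(Real.sinh (Real.pi * a / 2)) * Complex.I))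
      = (↑(Real.pi * a / 2) : ℂ) * Complex.I / (↑(Real.sinh (Real.pi * a / 2)) * Complex.I) by
    rw [hzdef]; push_cast; ring]
  rw [mul_div_mul_right _ _ Complex.I_ne_zero, ← Complex.ofReal_div]

theorem cosh_fourier_integral (a : ℝ) (ha : a ≠ 0) :
    ∫ t : ℝ, Real.cos (a * t) / (Real.cosh (2 * t) + 1)
      = (Real.pi * a / 2) / Real.sinh (Real.pi * a / 2) := by
  have hre : ∀ t : ℝ, Real.cos (a*t) / (Real.cosh (2*t) + 1)
      = (Complex.exp (↑(a*t) * Complex.I) / ((Real.cosh (2*t) + 1 : ℝ) : ℂ)).re := by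
    intro t
    have h : (0:ℝ) < Real.cosh (2*t) + 1 := by positivity
    rw [Complex.div_re, Complex.normSq_ofReal, Complex.ofReal_re, Complex.ofReal_im,
      Complex.exp_ofReal_mul_I_re]
    field_simp
    ring
  calc ∫ t : ℝ, Real.cos (a * t) / (Real.cosh (2 * t) + 1)
      = ∫ t : ℝ, (Complex.exp (↑(a*t) * Complex.I) / ((Real.cosh (2*t) + 1 : ℝ) : ℂ)).re := by
        exact integral_congr_ae (Filter.Eventually.of_forall hre)
    _ = (∫ t : ℝ, Complex.exp (↑(a*t) * Complex.I) / ((Real.cosh (2*t) + 1 : ℝ) : ℂ)).re :=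
        integral_re (coshfi_integrable a)
    _ = (Real.pi * a / 2) / Real.sinh (Real.pi * a / 2) := by
        rw [← coshfi_sub1 a, ← coshfi_sub2 ((↑a * Complex.I)/2), ← coshfi_beta,
          coshfi_gamma a ha, Complex.ofReal_re]
end
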